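/- A square matrix M with entries in a field is uniquely determined by its reflected initial minors, provided all these minors are nonzero: if two k × k matrices have all reflected initial minors nonzero and equal, then the matrices are equal. -/
import Mathlib


/-- The solid minor of a `k × k` matrix of size `s` whose rows are
`a, a+1, …, a+s-1` and whose columns are `b, b+1, …, b+s-1` (`0`-indexed). -/
def solidMinor {F : Type*} [Field F] {k : ℕ} (M : Matrix (Fin k) (Fin k) F)
    (s a b : ℕ) (ha : a + s ≤ k) (hb : b + s ≤ k) : F :=
  (M.submatrix (fun t : Fin s => (⟨a + t.val, by omega⟩ : Fin k))
               (fun t : Fin s => (⟨b + t.val, by omega⟩ : Fin k))).det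

/-- A square matrix over a field is uniquely determined by its reflected initial
minors (solid minors containing the last row or the first column), provided all
of these minors are nonzero: if two `k × k` matrices have all reflected initial
minors nonzero and equal, then the matrices are equal.  A solid minor with rows
`a, …, a+s-1` contains the last row iff `a + s = k`, and contains the first
column iff `b = 0`. -/
theorem matrix_eq_of_reflectedInitialMinors_eq {F : Type*} [Field F] {k : ℕ}
    (A B : Matrix (Fin k) (Fin k) F)
    (hA : ∀ (s a b : ℕ) (ha : a + s ≤ k) (hb : b + s ≤ k),
      1 ≤ s → (a + s = k ∨ b = 0) → solidMinor A s a b ha hb ≠ 0)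
    (hB : ∀ (s a b : ℕ) (ha : a + s ≤ k) (hb : b + s ≤ k),
      1 ≤ s → (a + s = k ∨ b = 0) → solidMinor B s a b ha hb ≠ 0)
    (hAB : ∀ (s a b : ℕ) (ha : a + s ≤ k) (hb : b + s ≤ k),
      1 ≤ s → (a + s = k ∨ b = 0) →
      solidMinor A s a b ha hb = solidMinor B s a b ha hb) :
    A = B := by
  clear hA
  suffices h : ∀ m (i j : ℕ) (hi : i < k) (hj : j < k), (k - 1 - i) * k + j = m →
      A ⟨i, hi⟩ ⟨j, hj⟩ = B ⟨i, hi⟩ ⟨j, hj⟩ by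
    ext i j
    exact h _ i j i.isLt j.isLt rfl
  intro m
  induction m using Nat.strong_induction_on with
  | _ m IH =>
  intro i j hi hj hm
  have IH' : ∀ (i' j' : ℕ) (hi' : i' < k) (hj' : j' < k),
      i < i' ∨ (i' = i ∧ j' < j) →
      A ⟨i', hi'⟩ ⟨j', hj'⟩ = B ⟨i', hi'⟩ ⟨j', hj'⟩ := by
    intro i' j' hi' hj' hlt
    refine IH ((k - 1 - i') * k + j') ?_ i' j' hi' hj' rfl
    subst hm
    rcases hlt with h | ⟨rfl, h⟩
    · have h1 : k - 1 - i' + 1 ≤ k - 1 - i := by omega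
      calc (k - 1 - i') * k + j' < (k - 1 - i' + 1) * k := by
            have : j' < k := hj'
            nlinarith
        _ ≤ (k - 1 - i) * k := Nat.mul_le_mul_right k h1
        _ ≤ (k - 1 - i) * k + j := Nat.le_add_right _ _
    · omega
  clear IH hm
  have hs1 : min (k - i) (j + 1) - 1 + 1 = min (k - i) (j + 1) := by omega
  set s' : ℕ := min (k - i) (j + 1) - 1 with hs'def
  set b : ℕ := j - s' with hbdef
  have hbj : s' ≤ j := by omega
  have ha : i + (s' + 1) ≤ k := by omega
  have hb : b + (s' + 1) ≤ k := by omega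
  have hrefl : i + (s' + 1) = k ∨ b = 0 := by omega
  set f : Fin (s' + 1) → Fin k := fun t => ⟨i + t.val, by have := t.isLt; omega⟩ with hf
  set g : Fin (s' + 1) → Fin k := fun u => ⟨b + u.val, by have := u.isLt; omega⟩ with hg
  have hdet : (A.submatrix f g).det = (B.submatrix f g).det :=
    hAB (s' + 1) i b ha hb (Nat.le_add_left 1 s') hrefl
  set NA := A.submatrix f g with hNA
  set NB := B.submatrix f g with hNB
  set d : F := A ⟨i, hi⟩ ⟨j, hj⟩ - B ⟨i, hi⟩ ⟨j, hj⟩ with hd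
  have hglast : g (Fin.last s') = ⟨j, hj⟩ := by
    apply Fin.ext
    simp [hg, Fin.last]
    omega
  have hf0 : f 0 = ⟨i, hi⟩ := by
    apply Fin.ext
    simp [hf]
  have hNAeq : NA = NB.updateRow 0 (NB 0 + Pi.single (Fin.last s') d) := by
    ext t u
    rcases eq_or_ne t 0 with rfl | ht
    · rw [Matrix.updateRow_self]
      rcases eq_or_ne u (Fin.last s') with rfl | hu
      · simp only [hNA, hNB, Matrix.submatrix_apply, hglast, hf0, Pi.add_apply,
          Pi.single_eq_same, hd]
        ring
      · have h0 : (Pi.single (Fin.last s') d : Fin (s' + 1) → F) u = 0 := by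
          simp [Pi.single_eq_of_ne hu]
        rw [Pi.add_apply, h0, add_zero]
        have huv : u.val < s' := by
          have h1 : u.val ≠ s' := fun h => hu (Fin.ext h)
          have := u.isLt
          omega
        have : A (f 0) (g u) = B (f 0) (g u) := by
          rw [hf0]
          have : g u = ⟨b + u.val, by omega⟩ := rfl
          rw [this]
          exact IH' i (b + u.val) hi (by omega) (Or.inr ⟨rfl, by omega⟩)
        exact this
    · rw [Matrix.updateRow_ne ht]
      have htv : 0 < t.val := by
        rcases Nat.eq_zero_or_pos t.val with h | h
        · exact absurd (Fin.ext h) ht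
        · exact h
      exact IH' (i + t.val) (b + u.val) (by have := t.isLt; omega)
        (by have := u.isLt; omega) (Or.inl (by omega))
  set C : F := (NB.submatrix Fin.succ Fin.castSucc).det with hC
  have hCne : C ≠ 0 := by
    rcases Nat.eq_zero_or_pos s' with hz | hs'pos
    · haveI : IsEmpty (Fin s') := ⟨fun t => by have := t.isLt; omega⟩
      rw [hC, Matrix.det_isEmpty]
      exact one_ne_zero
    · have ha' : (i + 1) + s' ≤ k := by omega
      have hb' : b + s' ≤ k := by omega
      have heq : NB.submatrix Fin.succ Fin.castSucc =
          B.submatrix (fun t : Fin s' => (⟨(i + 1) + t.val, by have := t.isLt; omega⟩ : Fin k))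
            (fun u : Fin s' => (⟨b + u.val, by have := u.isLt; omega⟩ : Fin k)) := by
        ext t u
        have h1 : f t.succ = (⟨(i + 1) + t.val, by have := t.isLt; omega⟩ : Fin k) :=
          Fin.ext (by simp [hf, Fin.val_succ]; omega)
        have h2 : g u.castSucc = (⟨b + u.val, by have := u.isLt; omega⟩ : Fin k) :=
          Fin.ext (by simp [hg])
        simp [hNB, Matrix.submatrix_apply, h1, h2]
      rw [hC, heq]
      exact hB s' (i + 1) b ha' hb' hs'pos (by omega)
  have hsub : ∀ (v : Fin (s' + 1) → F),
      (NB.updateRow 0 v).submatrix Fin.succ Fin.castSucc = NB.submatrix Fin.succ Fin.castSucc := by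
    intro v
    ext t u
    simp [Matrix.updateRow_ne (Fin.succ_ne_zero t)]
  have hsingle : (NB.updateRow 0 (Pi.single (Fin.last s') d)).det = (-1 : F) ^ s' * d * C := by
    rw [Matrix.det_succ_row_zero]
    rw [Finset.sum_eq_single (Fin.last s')]
    · rw [Matrix.updateRow_self, Pi.single_eq_same, Fin.succAbove_last, hsub]
      simp [Fin.val_last, hC]
    · intro u _ hu
      rw [Matrix.updateRow_self, Pi.single_eq_of_ne hu]
      ring
    · intro h
      exact absurd (Finset.mem_univ _) h
  have hkey : NA.det = NB.det + (-1 : F) ^ s' * d * C := by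
    rw [hNAeq, Matrix.det_updateRow_add, Matrix.updateRow_eq_self, hsingle]
  have h0 : (-1 : F) ^ s' * d * C = 0 := by
    have := hdet.symm.trans hkey
    exact (left_eq_add.mp this)
  have hd0 : d = 0 := by
    rcases mul_eq_zero.mp h0 with h | h
    · rcases mul_eq_zero.mp h with h | h
      · exact absurd h (pow_ne_zero _ (neg_ne_zero.mpr one_ne_zero))
      · exact h
    · exact absurd h hCne
  exact sub_eq_zero.mp hd0
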